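/- (Symmetric Trotter estimate, Banach-algebra form of Theorem 3.1.) Let A be a complete normed unital algebra over ℝ or ℂ, let a_1, …, a_k ∈ A and a = a_1 + ⋯ + a_k. Define σ(μ) = exp(μ·a_1/2)···exp(μ·a_k/2) · exp(μ·a_k/2)···exp(μ·a_1/2). Then for every T > 0 there exists a constant C > 0 (depending on k, T and the norms ‖a_1‖, …, ‖a_k‖) such that for all t ∈ [0, T] and all integers n ≥ 1, ‖exp(t·a) − σ(t/n)^n‖ ≤ C·t^3/n^2. -/

import Mathlib

set_option maxHeartbeats 1000000
set_option linter.unusedSectionVars false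

/-- The symmetric (Trotter–Suzuki) product
`σ^{(1)}_μ = exp(μ a₁/2) ⋯ exp(μ a_k/2) · exp(μ a_k/2) ⋯ exp(μ a₁/2)`
in a complete normed unital algebra. -/
noncomputable def symTrotterProd {A : Type*} [NormedRing A] [NormedAlgebra ℝ A]
    (k : ℕ) (a : Fin k → A) (s : ℝ) : A :=
  (List.ofFn fun i => (NormedSpace.expSeries ℝ A).sum ((s / 2) • a i)).prod *
  (List.ofFn fun i => (NormedSpace.expSeries ℝ A).sum ((s / 2) • a i)).reverse.prod

section Aux

variable {A : Type*} [NormedRing A] [NormedAlgebra ℝ A] [CompleteSpace A]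

noncomputable def N1 (A : Type*) [NormedRing A] : ℝ := max ‖(1:A)‖ 1

lemma N1_pos : 0 < N1 A := lt_of_lt_of_le one_pos (le_max_right _ _)
lemma one_le_N1 : 1 ≤ N1 A := le_max_right _ _

lemma norm_pow_le_N1 (b : A) (n : ℕ) : ‖b^n‖ ≤ N1 A * ‖b‖^n := by
  cases n with
  | zero => simpa [N1] using le_max_left ‖(1:A)‖ 1
  | succ n =>
    calc ‖b^(n+1)‖ ≤ ‖b‖^(n+1) := norm_pow_le' b n.succ_pos
    _ ≤ N1 A * ‖b‖^(n+1) := le_mul_of_one_le_left (by positivity) one_le_N1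

lemma norm_exp_le' (b : A) : ‖NormedSpace.exp b‖ ≤ N1 A * Real.exp ‖b‖ := by
  rw [NormedSpace.exp_eq_tsum ℝ]
  have hsum : Summable fun n : ℕ => ‖((n.factorial : ℝ)⁻¹) • b ^ n‖ :=
    NormedSpace.norm_expSeries_summable' b
  have hsum2 : Summable fun n : ℕ => N1 A * (‖b‖ ^ n / n.factorial) :=
    (Real.summable_pow_div_factorial ‖b‖).mul_left _
  calc ‖∑' n : ℕ, ((n.factorial : ℝ)⁻¹) • b ^ n‖ ≤ ∑' n : ℕ, ‖((n.factorial : ℝ)⁻¹) • b ^ n‖ :=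
        norm_tsum_le_tsum_norm hsum
    _ ≤ ∑' n : ℕ, N1 A * (‖b‖ ^ n / n.factorial) := by
        refine Summable.tsum_le_tsum (fun n => ?_) hsum hsum2
        rw [norm_smul, norm_inv, Real.norm_natCast]
        calc (n.factorial : ℝ)⁻¹ * ‖b^n‖ ≤ (n.factorial : ℝ)⁻¹ * (N1 A * ‖b‖^n) := by
              gcongr
              exact norm_pow_le_N1 b n
          _ = N1 A * (‖b‖ ^ n / n.factorial) := by rw [div_eq_mul_inv]; ring
    _ = N1 A * Real.exp ‖b‖ := by
        rw [tsum_mul_left, Real.exp_eq_exp_ℝ, NormedSpace.exp_eq_tsum_div]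

noncomputable def poly2 (b : A) : A := 1 + b + (2⁻¹ : ℝ) • (b*b)

lemma norm_poly2_le (b : A) : ‖poly2 b‖ ≤ N1 A * Real.exp ‖b‖ := by
  have h3 : (1:ℝ) + ‖b‖ + ‖b‖^2/2 ≤ Real.exp ‖b‖ := by
    have := Real.sum_le_exp_of_nonneg (norm_nonneg b) 3
    simp [Finset.sum_range_succ, Nat.factorial] at this
    nlinarith [this]
  calc ‖poly2 b‖ ≤ ‖(1:A)‖ + ‖b‖ + ‖(2⁻¹:ℝ) • (b*b)‖ := by
        refine le_trans (norm_add_le _ _) ?_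
        gcongr
        exact norm_add_le _ _
    _ ≤ N1 A * 1 + N1 A * ‖b‖ + N1 A * (‖b‖^2/2) := by
        gcongr ?_ + ?_ + ?_
        · rw [mul_one]; exact le_max_left _ _
        · exact le_mul_of_one_le_left (norm_nonneg b) one_le_N1
        · rw [norm_smul]
          have : ‖b*b‖ ≤ ‖b‖*‖b‖ := norm_mul_le b b
          have h1 : (1:ℝ) ≤ N1 A := one_le_N1
          simp only [norm_inv, Real.norm_ofNat]
          nlinarith [norm_nonneg (b*b), norm_nonneg b]
    _ = N1 A * (1 + ‖b‖ + ‖b‖^2/2) := by ring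
    _ ≤ N1 A * Real.exp ‖b‖ := by
        have := N1_pos (A := A)
        nlinarith
  
lemma norm_exp_sub_poly2_le (b : A) :
    ‖NormedSpace.exp b - poly2 b‖ ≤ ‖b‖^3 * Real.exp ‖b‖ := by
  set f : ℕ → A := fun n => (n.factorial : ℝ)⁻¹ • b ^ n with hf
  have hs : Summable f := NormedSpace.expSeries_summable' b
  have hns : Summable fun n => ‖f n‖ := NormedSpace.norm_expSeries_summable' b
  have key : (∑ i ∈ Finset.range 3, f i) + ∑' n : ℕ, f (n + 3) = ∑' n : ℕ, f n :=
    hs.sum_add_tsum_nat_add 3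
  have hpoly : (∑ i ∈ Finset.range 3, f i) = poly2 b := by
    simp [hf, Finset.sum_range_succ, poly2, Nat.factorial, pow_two]
  have hdiff : NormedSpace.exp b - poly2 b = ∑' n : ℕ, f (n + 3) := by
    have hexp : NormedSpace.exp b = ∑' n : ℕ, f n := congrFun (NormedSpace.exp_eq_tsum ℝ) b
    rw [hexp, ← key, hpoly]
    abel
  rw [hdiff]
  have hns3 : Summable fun n => ‖f (n + 3)‖ := (summable_nat_add_iff 3).mpr hns
  have hbound : ∀ n : ℕ, ‖f (n + 3)‖ ≤ ‖b‖^3 * (‖b‖^n / n.factorial) := by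
    intro n
    have h1 : ‖f (n+3)‖ ≤ ((n+3).factorial : ℝ)⁻¹ * ‖b‖^(n+3) := by
      rw [hf, norm_smul, norm_inv, Real.norm_natCast]
      gcongr
      exact norm_pow_le' b (by omega)
    have h2 : ((n+3).factorial : ℝ)⁻¹ ≤ (n.factorial : ℝ)⁻¹ := by
      apply inv_anti₀
      · exact_mod_cast Nat.factorial_pos n
      · exact_mod_cast Nat.factorial_le (by omega)
    calc ‖f (n+3)‖ ≤ ((n+3).factorial : ℝ)⁻¹ * ‖b‖^(n+3) := h1
      _ ≤ (n.factorial : ℝ)⁻¹ * ‖b‖^(n+3) := by gcongr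
      _ = ‖b‖^3 * (‖b‖^n / n.factorial) := by rw [pow_add, div_eq_mul_inv]; ring
  have hsum2 : Summable fun n : ℕ => ‖b‖^3 * (‖b‖ ^ n / n.factorial) :=
    (Real.summable_pow_div_factorial ‖b‖).mul_left _
  calc ‖∑' n : ℕ, f (n + 3)‖ ≤ ∑' n : ℕ, ‖f (n + 3)‖ := norm_tsum_le_tsum_norm hns3
    _ ≤ ∑' n : ℕ, ‖b‖^3 * (‖b‖^n / n.factorial) := Summable.tsum_le_tsum hbound hns3 hsum2
    _ = ‖b‖^3 * Real.exp ‖b‖ := by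
        rw [tsum_mul_left, Real.exp_eq_exp_ℝ, NormedSpace.exp_eq_tsum_div]

theorem poly2_identity (x y : A) :
    poly2 x * poly2 y * poly2 x = poly2 ((2:ℝ)•x + y)
    + ((2⁻¹:ℝ) • (x*(y*y) + x*(x*y) + y*(y*x) + y*(x*x)) + (x*(x*x) + x*(y*x))
    + (4⁻¹:ℝ) • (x*(x*(y*y)) + x*(x*(x*x)) + y*(y*(x*x)))
    + (2⁻¹:ℝ) • (x*(y*(y*x)) + x*(x*(y*x)) + x*(y*(x*x)))
    + (4⁻¹:ℝ) • (x*(x*(y*(y*x))) + x*(y*(y*(x*x))) + x*(x*(y*(x*x))))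
    + (8⁻¹:ℝ) • (x*(x*(y*(y*(x*x)))))) := by
  simp only [poly2, mul_add, add_mul, smul_add, add_smul, smul_mul_assoc, mul_smul_comm,
    smul_smul, mul_one, one_mul, mul_assoc]
  module


lemma six_bound (g1 g2 g3 g4 g5 g6 : A) (b1 b2 b3 b4 b5 b6 : ℝ)
    (h1 : ‖g1‖ ≤ b1) (h2 : ‖g2‖ ≤ b2) (h3 : ‖g3‖ ≤ b3) (h4 : ‖g4‖ ≤ b4)
    (h5 : ‖g5‖ ≤ b5) (h6 : ‖g6‖ ≤ b6) :
    ‖g1 + g2 + g3 + g4 + g5 + g6‖ ≤ b1 + b2 + b3 + b4 + b5 + b6 := by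
  calc ‖g1 + g2 + g3 + g4 + g5 + g6‖
      ≤ ‖g1 + g2 + g3 + g4 + g5‖ + ‖g6‖ := norm_add_le _ _
    _ ≤ (‖g1 + g2 + g3 + g4‖ + ‖g5‖) + ‖g6‖ := by gcongr; exact norm_add_le _ _
    _ ≤ ((‖g1 + g2 + g3‖ + ‖g4‖) + ‖g5‖) + ‖g6‖ := by gcongr; exact norm_add_le _ _
    _ ≤ (((‖g1‖ + ‖g2‖ + ‖g3‖) + ‖g4‖) + ‖g5‖) + ‖g6‖ := by gcongr; exact norm_add₃_le
    _ ≤ b1 + b2 + b3 + b4 + b5 + b6 := by gcongr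

lemma strang (x y : A) (T : ℝ) (hT : 0 < T) :
    ∃ C : ℝ, 0 < C ∧ ∀ s ∈ Set.Icc (0:ℝ) T,
      ‖NormedSpace.exp (s•(x+y)) -
        NormedSpace.exp ((s/2)•x) * NormedSpace.exp (s•y) * NormedSpace.exp ((s/2)•x)‖
        ≤ C * s^3 := by
  set M : ℝ := ‖x‖ + ‖y‖ + 1 with hM
  have hM1 : 1 ≤ M := by
    have h1 := norm_nonneg x; have h2 := norm_nonneg y
    rw [hM]; linarith
  have hM0 : 0 < M := lt_of_lt_of_le one_pos hM1
  set R : ℝ := T * M with hR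
  have hR0 : 0 ≤ R := by positivity
  set K : ℝ := N1 A * Real.exp R with hK
  have hN0 : (0:ℝ) ≤ N1 A := le_trans zero_le_one one_le_N1
  have hK1 : 1 ≤ K := by
    have h1 : (1:ℝ) ≤ Real.exp R := Real.one_le_exp hR0
    have h2 := one_le_N1 (A := A)
    nlinarith
  have hK0 : 0 < K := lt_of_lt_of_le one_pos hK1
  refine ⟨M^3 * Real.exp R + M^3 * (4 + 3*R + R^2 + R^3) + 3 * (K^2 * (M^3 * Real.exp R)),
    by positivity, ?_⟩
  rintro s ⟨hs0, hsT⟩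
  set u : A := (s/2) • x with hu
  set v : A := s • y with hv
  set z : A := s • (x + y) with hz
  set r : ℝ := s * M with hr
  have hr0 : 0 ≤ r := by positivity
  have hrR : r ≤ R := by
    rw [hr, hR]; exact mul_le_mul_of_nonneg_right hsT (le_of_lt hM0)
  have hur : ‖u‖ ≤ r := by
    rw [hu, norm_smul, Real.norm_eq_abs, abs_of_nonneg (by linarith : (0:ℝ) ≤ s/2), hr, hM]
    nlinarith [norm_nonneg x, norm_nonneg y]
  have hvr : ‖v‖ ≤ r := by
    rw [hv, norm_smul, Real.norm_eq_abs, abs_of_nonneg hs0, hr, hM]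
    nlinarith [norm_nonneg x, norm_nonneg y]
  have hzr : ‖z‖ ≤ r := by
    rw [hz, norm_smul, Real.norm_eq_abs, abs_of_nonneg hs0, hr, hM]
    have := norm_add_le x y
    nlinarith [norm_nonneg (x + y)]
  have hurR : ‖u‖ ≤ R := hur.trans hrR
  have hvrR : ‖v‖ ≤ R := hvr.trans hrR
  have hzrR : ‖z‖ ≤ R := hzr.trans hrR
  have hexpK : ∀ b : A, ‖b‖ ≤ R → ‖NormedSpace.exp b‖ ≤ K := by
    intro b hb
    refine (norm_exp_le' b).trans ?_
    rw [hK]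
    exact mul_le_mul_of_nonneg_left (Real.exp_le_exp.mpr hb) hN0
  have hpolyK : ∀ b : A, ‖b‖ ≤ R → ‖poly2 b‖ ≤ K := by
    intro b hb
    refine (norm_poly2_le b).trans ?_
    rw [hK]
    exact mul_le_mul_of_nonneg_left (Real.exp_le_exp.mpr hb) hN0
  have hrem : ∀ b : A, ‖b‖ ≤ r → ‖NormedSpace.exp b - poly2 b‖ ≤ r^3 * Real.exp R := by
    intro b hb
    refine (norm_exp_sub_poly2_le b).trans ?_
    have h1 : ‖b‖^3 ≤ r^3 := pow_le_pow_left₀ (norm_nonneg b) hb 3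
    exact mul_le_mul h1 (Real.exp_le_exp.mpr (hb.trans hrR)) (Real.exp_pos _).le
      (by positivity)
  have p3 : ∀ a b c : A, ‖a‖ ≤ r → ‖b‖ ≤ r → ‖c‖ ≤ r → ‖a*(b*c)‖ ≤ r^3 := by
    intro a b c ha hb hc
    calc ‖a*(b*c)‖ ≤ r*(r*r) := norm_mul_le_of_le ha (norm_mul_le_of_le hb hc)
      _ = r^3 := by ring
  have p4 : ∀ a b c d : A, ‖a‖ ≤ r → ‖b‖ ≤ r → ‖c‖ ≤ r → ‖d‖ ≤ r → ‖a*(b*(c*d))‖ ≤ r^4 := by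
    intro a b c d ha hb hc hd
    calc ‖a*(b*(c*d))‖ ≤ r*(r*(r*r)) :=
          norm_mul_le_of_le ha (norm_mul_le_of_le hb (norm_mul_le_of_le hc hd))
      _ = r^4 := by ring
  have p5 : ∀ a b c d e : A, ‖a‖ ≤ r → ‖b‖ ≤ r → ‖c‖ ≤ r → ‖d‖ ≤ r → ‖e‖ ≤ r →
      ‖a*(b*(c*(d*e)))‖ ≤ r^5 := by
    intro a b c d e ha hb hc hd he
    calc ‖a*(b*(c*(d*e)))‖ ≤ r*(r*(r*(r*r))) :=
          norm_mul_le_of_le ha (norm_mul_le_of_le hb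
            (norm_mul_le_of_le hc (norm_mul_le_of_le hd he)))
      _ = r^5 := by ring
  have p6 : ‖u*(u*(v*(v*(u*u))))‖ ≤ r^6 := by
    calc ‖u*(u*(v*(v*(u*u))))‖ ≤ r*(r*(r*(r*(r*r)))) :=
          norm_mul_le_of_le hur (norm_mul_le_of_le hur (norm_mul_le_of_le hvr
            (norm_mul_le_of_le hvr (norm_mul_le_of_le hur hur))))
      _ = r^6 := by ring
  have herr : ‖poly2 u * poly2 v * poly2 u - poly2 z‖ ≤ M^3 * (4 + 3*R + R^2 + R^3) * s^3 := by
    have hzuv : (2:ℝ)•u + v = z := by rw [hu, hv, hz]; module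
    have heq : poly2 u * poly2 v * poly2 u - poly2 z
        = (2⁻¹:ℝ) • (u*(v*v) + u*(u*v) + v*(v*u) + v*(u*u)) + (u*(u*u) + u*(v*u))
        + (4⁻¹:ℝ) • (u*(u*(v*v)) + u*(u*(u*u)) + v*(v*(u*u)))
        + (2⁻¹:ℝ) • (u*(v*(v*u)) + u*(u*(v*u)) + u*(v*(u*u)))
        + (4⁻¹:ℝ) • (u*(u*(v*(v*u))) + u*(v*(v*(u*u))) + u*(u*(v*(u*u))))
        + (8⁻¹:ℝ) • (u*(u*(v*(v*(u*u))))) := by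
      rw [← hzuv, poly2_identity u v]; abel
    rw [heq]
    have hG1 : ‖(2⁻¹:ℝ) • (u*(v*v) + u*(u*v) + v*(v*u) + v*(u*u))‖ ≤ 2 * r^3 := by
      rw [norm_smul, Real.norm_eq_abs, abs_of_nonneg (by norm_num : (0:ℝ) ≤ 2⁻¹)]
      have h1 : ‖u*(v*v) + u*(u*v) + v*(v*u) + v*(u*u)‖ ≤ 4 * r^3 := by
        calc ‖u*(v*v) + u*(u*v) + v*(v*u) + v*(u*u)‖
            ≤ ‖u*(v*v) + u*(u*v) + v*(v*u)‖ + ‖v*(u*u)‖ := norm_add_le _ _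
          _ ≤ (‖u*(v*v)‖ + ‖u*(u*v)‖ + ‖v*(v*u)‖) + ‖v*(u*u)‖ := by
              gcongr; exact norm_add₃_le
          _ ≤ (r^3 + r^3 + r^3) + r^3 := by
              gcongr <;> [exact p3 _ _ _ hur hvr hvr; exact p3 _ _ _ hur hur hvr;
                exact p3 _ _ _ hvr hvr hur; exact p3 _ _ _ hvr hur hur]
          _ = 4 * r^3 := by ring
      nlinarith [pow_nonneg hr0 3]
    have hG2 : ‖u*(u*u) + u*(v*u)‖ ≤ 2 * r^3 := by
      calc ‖u*(u*u) + u*(v*u)‖ ≤ ‖u*(u*u)‖ + ‖u*(v*u)‖ := norm_add_le _ _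
        _ ≤ r^3 + r^3 := add_le_add (p3 _ _ _ hur hur hur) (p3 _ _ _ hur hvr hur)
        _ = 2 * r^3 := by ring
    have hG3 : ‖(4⁻¹:ℝ) • (u*(u*(v*v)) + u*(u*(u*u)) + v*(v*(u*u)))‖ ≤ r^4 := by
      rw [norm_smul, Real.norm_eq_abs, abs_of_nonneg (by norm_num : (0:ℝ) ≤ 4⁻¹)]
      have h1 : ‖u*(u*(v*v)) + u*(u*(u*u)) + v*(v*(u*u))‖ ≤ 3 * r^4 := by
        calc ‖u*(u*(v*v)) + u*(u*(u*u)) + v*(v*(u*u))‖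
            ≤ ‖u*(u*(v*v))‖ + ‖u*(u*(u*u))‖ + ‖v*(v*(u*u))‖ := norm_add₃_le
          _ ≤ r^4 + r^4 + r^4 := by
              gcongr <;> [exact p4 _ _ _ _ hur hur hvr hvr; exact p4 _ _ _ _ hur hur hur hur;
                exact p4 _ _ _ _ hvr hvr hur hur]
          _ = 3 * r^4 := by ring
      nlinarith [pow_nonneg hr0 4]
    have hG4 : ‖(2⁻¹:ℝ) • (u*(v*(v*u)) + u*(u*(v*u)) + u*(v*(u*u)))‖ ≤ 2 * r^4 := by
      rw [norm_smul, Real.norm_eq_abs, abs_of_nonneg (by norm_num : (0:ℝ) ≤ 2⁻¹)]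
      have h1 : ‖u*(v*(v*u)) + u*(u*(v*u)) + u*(v*(u*u))‖ ≤ 3 * r^4 := by
        calc ‖u*(v*(v*u)) + u*(u*(v*u)) + u*(v*(u*u))‖
            ≤ ‖u*(v*(v*u))‖ + ‖u*(u*(v*u))‖ + ‖u*(v*(u*u))‖ := norm_add₃_le
          _ ≤ r^4 + r^4 + r^4 := by
              gcongr <;> [exact p4 _ _ _ _ hur hvr hvr hur; exact p4 _ _ _ _ hur hur hvr hur;
                exact p4 _ _ _ _ hur hvr hur hur]
          _ = 3 * r^4 := by ring
      nlinarith [pow_nonneg hr0 4]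
    have hG5 : ‖(4⁻¹:ℝ) • (u*(u*(v*(v*u))) + u*(v*(v*(u*u))) + u*(u*(v*(u*u))))‖ ≤ r^5 := by
      rw [norm_smul, Real.norm_eq_abs, abs_of_nonneg (by norm_num : (0:ℝ) ≤ 4⁻¹)]
      have h1 : ‖u*(u*(v*(v*u))) + u*(v*(v*(u*u))) + u*(u*(v*(u*u)))‖ ≤ 3 * r^5 := by
        calc ‖u*(u*(v*(v*u))) + u*(v*(v*(u*u))) + u*(u*(v*(u*u)))‖
            ≤ ‖u*(u*(v*(v*u)))‖ + ‖u*(v*(v*(u*u)))‖ + ‖u*(u*(v*(u*u)))‖ := norm_add₃_le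
          _ ≤ r^5 + r^5 + r^5 := by
              gcongr <;> [exact p5 _ _ _ _ _ hur hur hvr hvr hur;
                exact p5 _ _ _ _ _ hur hvr hvr hur hur;
                exact p5 _ _ _ _ _ hur hur hvr hur hur]
          _ = 3 * r^5 := by ring
      nlinarith [pow_nonneg hr0 5]
    have hG6 : ‖(8⁻¹:ℝ) • (u*(u*(v*(v*(u*u)))))‖ ≤ r^6 := by
      rw [norm_smul, Real.norm_eq_abs, abs_of_nonneg (by norm_num : (0:ℝ) ≤ 8⁻¹)]
      nlinarith [p6, norm_nonneg (u*(u*(v*(v*(u*u))))), pow_nonneg hr0 6]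
    refine le_trans (six_bound _ _ _ _ _ _ _ _ _ _ _ _ hG1 hG2 hG3 hG4 hG5 hG6) ?_
    have hbound : 2*r^3 + 2*r^3 + r^4 + 2*r^4 + r^5 + r^6 ≤ r^3 * (4 + 3*R + R^2 + R^3) := by
      have hr2 : r^2 ≤ R^2 := by gcongr
      have hr3 : r^3 ≤ R^3 := by gcongr
      nlinarith [pow_nonneg hr0 3]
    refine hbound.trans (le_of_eq ?_)
    rw [hr]; ring
  have hcross : ‖NormedSpace.exp u * NormedSpace.exp v * NormedSpace.exp u
      - poly2 u * poly2 v * poly2 u‖ ≤ 3 * (K^2 * (M^3 * Real.exp R)) * s^3 := by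
    have iden : NormedSpace.exp u * NormedSpace.exp v * NormedSpace.exp u
        - poly2 u * poly2 v * poly2 u
        = (NormedSpace.exp u - poly2 u) * NormedSpace.exp v * NormedSpace.exp u
        + poly2 u * (NormedSpace.exp v - poly2 v) * NormedSpace.exp u
        + poly2 u * poly2 v * (NormedSpace.exp u - poly2 u) := by noncomm_ring
    have e1 : ‖(NormedSpace.exp u - poly2 u) * NormedSpace.exp v * NormedSpace.exp u‖
        ≤ (r^3 * Real.exp R) * K * K :=
      norm_mul_le_of_le (norm_mul_le_of_le (hrem u hur) (hexpK v hvrR)) (hexpK u hurR)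
    have e2 : ‖poly2 u * (NormedSpace.exp v - poly2 v) * NormedSpace.exp u‖
        ≤ K * (r^3 * Real.exp R) * K :=
      norm_mul_le_of_le (norm_mul_le_of_le (hpolyK u hurR) (hrem v hvr)) (hexpK u hurR)
    have e3 : ‖poly2 u * poly2 v * (NormedSpace.exp u - poly2 u)‖
        ≤ K * K * (r^3 * Real.exp R) :=
      norm_mul_le_of_le (norm_mul_le_of_le (hpolyK u hurR) (hpolyK v hvrR)) (hrem u hur)
    rw [iden]
    refine le_trans (le_trans norm_add₃_le (add_le_add (add_le_add e1 e2) e3))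
      (le_of_eq ?_)
    rw [hr]; ring
  have hz3 : ‖NormedSpace.exp z - poly2 z‖ ≤ M^3 * Real.exp R * s^3 := by
    refine (hrem z hzr).trans (le_of_eq ?_)
    rw [hr]; ring
  have split : NormedSpace.exp z
      - NormedSpace.exp u * NormedSpace.exp v * NormedSpace.exp u
      = (NormedSpace.exp z - poly2 z)
      + (poly2 z - poly2 u * poly2 v * poly2 u)
      + (poly2 u * poly2 v * poly2 u
          - NormedSpace.exp u * NormedSpace.exp v * NormedSpace.exp u) := by abel
  rw [split, add_mul, add_mul]
  refine le_trans norm_add₃_le (add_le_add (add_le_add hz3 ?_) ?_)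
  · rw [norm_sub_rev]; exact herr
  · rw [norm_sub_rev]; exact hcross

lemma symTrotter_zero (a : Fin 0 → A) (s : ℝ) : symTrotterProd 0 a s = 1 := by
  simp [symTrotterProd, ← NormedSpace.exp_eq_expSeries_sum ℝ]

lemma symTrotter_succ (k : ℕ) (a : Fin (k+1) → A) (s : ℝ) :
    symTrotterProd (k+1) a s
      = NormedSpace.exp ((s/2) • a 0) * symTrotterProd k (fun i => a i.succ) s
        * NormedSpace.exp ((s/2) • a 0) := by
  simp [symTrotterProd, ← NormedSpace.exp_eq_expSeries_sum ℝ, List.ofFn_succ, List.prod_cons, List.reverse_cons, List.prod_append,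
    mul_assoc]

lemma norm_pow_mul_le (b x : A) (n : ℕ) : ‖b^n * x‖ ≤ ‖b‖^n * ‖x‖ := by
  induction n with
  | zero => simp
  | succ n ih =>
    have h : b^(n+1) * x = b * (b^n * x) := by rw [pow_succ']; rw [mul_assoc]
    rw [h, pow_succ']
    calc ‖b * (b^n * x)‖ ≤ ‖b‖ * ‖b^n * x‖ := norm_mul_le _ _
      _ ≤ ‖b‖ * (‖b‖^n * ‖x‖) := by
          have := norm_nonneg b
          exact mul_le_mul_of_nonneg_left ih this
      _ = ‖b‖ * ‖b‖^n * ‖x‖ := by ring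

lemma exp_mul_norm_le (b x : A) :
    ‖NormedSpace.exp b * x‖ ≤ Real.exp ‖b‖ * ‖x‖ := by
  have hs : Summable (fun n : ℕ => (n.factorial:ℝ)⁻¹ • b^n) :=
    NormedSpace.expSeries_summable' b
  have hexp : NormedSpace.exp b = ∑' n : ℕ, (n.factorial:ℝ)⁻¹ • b^n :=
    congrFun (NormedSpace.exp_eq_tsum ℝ) b
  have h1 : HasSum (fun n : ℕ => ((n.factorial:ℝ)⁻¹ • b^n) * x) (NormedSpace.exp b * x) := by
    rw [hexp]
    exact hs.hasSum.mul_right x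
  have hpt : ∀ n : ℕ, ‖((n.factorial:ℝ)⁻¹ • b^n) * x‖ ≤ (‖b‖^n / n.factorial) * ‖x‖ := by
    intro n
    rw [smul_mul_assoc, norm_smul, norm_inv, Real.norm_natCast]
    calc (n.factorial:ℝ)⁻¹ * ‖b^n * x‖ ≤ (n.factorial:ℝ)⁻¹ * (‖b‖^n * ‖x‖) := by
          have h0 : (0:ℝ) ≤ (n.factorial:ℝ)⁻¹ := by positivity
          exact mul_le_mul_of_nonneg_left (norm_pow_mul_le b x n) h0
      _ = (‖b‖^n / n.factorial) * ‖x‖ := by rw [div_eq_mul_inv]; ring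
  have hmaj : Summable (fun n : ℕ => (‖b‖^n / n.factorial) * ‖x‖) :=
    (Real.summable_pow_div_factorial ‖b‖).mul_right _
  have hnorm : Summable (fun n : ℕ => ‖((n.factorial:ℝ)⁻¹ • b^n) * x‖) :=
    Summable.of_nonneg_of_le (fun n => norm_nonneg _) hpt hmaj
  calc ‖NormedSpace.exp b * x‖ = ‖∑' n : ℕ, ((n.factorial:ℝ)⁻¹ • b^n) * x‖ := by
        rw [h1.tsum_eq]
    _ ≤ ∑' n : ℕ, ‖((n.factorial:ℝ)⁻¹ • b^n) * x‖ := norm_tsum_le_tsum_norm hnorm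
    _ ≤ ∑' n : ℕ, (‖b‖^n / n.factorial) * ‖x‖ := Summable.tsum_le_tsum hpt hnorm hmaj
    _ = (∑' n : ℕ, ‖b‖^n / n.factorial) * ‖x‖ := tsum_mul_right
    _ = Real.exp ‖b‖ * ‖x‖ := by
        rw [Real.exp_eq_exp_ℝ, NormedSpace.exp_eq_tsum_div]

lemma sigma_mul_norm_le (k : ℕ) (a : Fin k → A) (s : ℝ) (hs : 0 ≤ s) (x : A) :
    ‖symTrotterProd k a s * x‖ ≤ Real.exp (s * ∑ i, ‖a i‖) * ‖x‖ := by
  induction k generalizing x with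
  | zero =>
    simp [symTrotter_zero]
  | succ k ih =>
    rw [symTrotter_succ]
    have hE : ∀ w : A, ‖NormedSpace.exp ((s/2) • a 0) * w‖
        ≤ Real.exp ((s/2) * ‖a 0‖) * ‖w‖ := by
      intro w
      have := exp_mul_norm_le ((s/2) • a 0) w
      rwa [norm_smul, Real.norm_eq_abs, abs_of_nonneg (by linarith : (0:ℝ) ≤ s/2)] at this
    have assoc : NormedSpace.exp ((s/2) • a 0) * symTrotterProd k (fun i => a i.succ) s
        * NormedSpace.exp ((s/2) • a 0) * x
        = NormedSpace.exp ((s/2) • a 0) * (symTrotterProd k (fun i => a i.succ) s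
          * (NormedSpace.exp ((s/2) • a 0) * x)) := by
      rw [mul_assoc, mul_assoc]
    rw [assoc]
    calc ‖_‖ ≤ Real.exp ((s/2) * ‖a 0‖) * ‖symTrotterProd k (fun i => a i.succ) s
          * (NormedSpace.exp ((s/2) • a 0) * x)‖ := hE _
      _ ≤ Real.exp ((s/2) * ‖a 0‖) * (Real.exp (s * ∑ i : Fin k, ‖a i.succ‖)
          * ‖NormedSpace.exp ((s/2) • a 0) * x‖) := by
          have h0 : (0:ℝ) ≤ Real.exp ((s/2) * ‖a 0‖) := (Real.exp_pos _).le
          exact mul_le_mul_of_nonneg_left (ih (fun i => a i.succ) _) h0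
      _ ≤ Real.exp ((s/2) * ‖a 0‖) * (Real.exp (s * ∑ i : Fin k, ‖a i.succ‖)
          * (Real.exp ((s/2) * ‖a 0‖) * ‖x‖)) := by
          have h0 : (0:ℝ) ≤ Real.exp ((s/2) * ‖a 0‖) := (Real.exp_pos _).le
          have h1 : (0:ℝ) ≤ Real.exp (s * ∑ i : Fin k, ‖a i.succ‖) := (Real.exp_pos _).le
          exact mul_le_mul_of_nonneg_left (mul_le_mul_of_nonneg_left (hE x) h1) h0
      _ = Real.exp (s * ∑ i : Fin (k+1), ‖a i‖) * ‖x‖ := by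
          rw [Fin.sum_univ_succ,
            show s * (‖a 0‖ + ∑ i : Fin k, ‖a i.succ‖)
              = (s/2) * ‖a 0‖ + (s * ∑ i : Fin k, ‖a i.succ‖ + (s/2) * ‖a 0‖) from by ring,
            Real.exp_add, Real.exp_add]
          ring

lemma pow_diff_bound (b c : A) (L N ε : ℝ) (hL1 : 1 ≤ L) (hN : 0 ≤ N) (hε : 0 ≤ ε)
    (hb : ∀ w : A, ‖b * w‖ ≤ L * ‖w‖) (hc : ∀ m : ℕ, ‖c ^ m‖ ≤ N * L ^ m)
    (hbc : ‖c - b‖ ≤ ε) : ∀ m : ℕ, ‖c ^ m - b ^ m‖ ≤ m * N * L ^ m * ε := by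
  have hL0 : (0:ℝ) ≤ L := le_trans zero_le_one hL1
  intro m
  induction m with
  | zero => simp
  | succ m ih =>
    have key : c^(m+1) - b^(m+1) = b * (c^m - b^m) + (c - b) * c^m := by
      rw [pow_succ', pow_succ']
      noncomm_ring
    rw [key]
    have hLm : (0:ℝ) ≤ L^m := pow_nonneg hL0 m
    calc ‖b * (c^m - b^m) + (c - b) * c^m‖
        ≤ ‖b * (c^m - b^m)‖ + ‖(c - b) * c^m‖ := norm_add_le _ _
      _ ≤ L * ‖c^m - b^m‖ + ε * (N * L^m) :=
          add_le_add (hb _) (norm_mul_le_of_le hbc (hc m))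
      _ ≤ L * (m * N * L^m * ε) + ε * (N * L^m) := by
          have := hb (c^m - b^m)
          exact add_le_add (mul_le_mul_of_nonneg_left ih hL0) le_rfl
      _ ≤ (m+1 : ℕ) * N * L^(m+1) * ε := by
          push_cast
          have h1 : L * (m * N * L^m * ε) = m * N * L^(m+1) * ε := by ring
          have hLpow : L^m ≤ L^(m+1) := by
            calc L^m = L^m * 1 := by ring
              _ ≤ L^m * L := by exact mul_le_mul_of_nonneg_left hL1 hLm
              _ = L^(m+1) := by ring
          have h2 : ε * (N * L^m) ≤ ε * (N * L^(m+1)) := by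
            apply mul_le_mul_of_nonneg_left _ hε
            exact mul_le_mul_of_nonneg_left hLpow hN
          nlinarith [Nat.cast_nonneg (α := ℝ) m, pow_nonneg hL0 (m+1)]

lemma local_est (k : ℕ) (a : Fin k → A) (T : ℝ) (hT : 0 < T) :
    ∃ C : ℝ, 0 < C ∧ ∀ s ∈ Set.Icc (0:ℝ) T,
      ‖NormedSpace.exp (s • ∑ i, a i) - symTrotterProd k a s‖ ≤ C * s^3 := by
  induction k with
  | zero =>
    refine ⟨1, one_pos, ?_⟩
    rintro s ⟨hs0, hsT⟩
    rw [symTrotter_zero]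
    simp only [Finset.univ_eq_empty, Finset.sum_empty, smul_zero, NormedSpace.exp_zero,
      sub_self, norm_zero]
    positivity
  | succ k ih =>
    obtain ⟨C₁, hC₁0, hC₁⟩ := strang (a 0) (∑ i : Fin k, a i.succ) T hT
    obtain ⟨C₂, hC₂0, hC₂⟩ := ih (fun i => a i.succ)
    have hN0 : (0:ℝ) ≤ N1 A := le_trans zero_le_one one_le_N1
    have hN1 : (1:ℝ) ≤ N1 A := one_le_N1
    refine ⟨C₁ + Real.exp (T * ‖a 0‖) * N1 A * C₂, ?_, ?_⟩
    · have h1 : (0:ℝ) < Real.exp (T * ‖a 0‖) := Real.exp_pos _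
      have h2 := mul_pos (mul_pos h1 (lt_of_lt_of_le one_pos hN1)) hC₂0
      linarith
    rintro s ⟨hs0, hsT⟩
    rw [symTrotter_succ]
    have hsum : (∑ i : Fin (k+1), a i) = a 0 + ∑ i : Fin k, a i.succ := Fin.sum_univ_succ a
    have split : NormedSpace.exp (s • ∑ i : Fin (k+1), a i)
        - NormedSpace.exp ((s/2) • a 0) * symTrotterProd k (fun i => a i.succ) s
          * NormedSpace.exp ((s/2) • a 0)
        = (NormedSpace.exp (s • (a 0 + ∑ i : Fin k, a i.succ))
            - NormedSpace.exp ((s/2) • a 0) * NormedSpace.exp (s • ∑ i : Fin k, a i.succ)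
              * NormedSpace.exp ((s/2) • a 0))
        + (NormedSpace.exp ((s/2) • a 0) * NormedSpace.exp (s • ∑ i : Fin k, a i.succ)
              * NormedSpace.exp ((s/2) • a 0)
            - NormedSpace.exp ((s/2) • a 0) * symTrotterProd k (fun i => a i.succ) s
              * NormedSpace.exp ((s/2) • a 0)) := by
      rw [hsum]; abel
    rw [split]
    have h1 : ‖NormedSpace.exp (s • (a 0 + ∑ i : Fin k, a i.succ))
        - NormedSpace.exp ((s/2) • a 0) * NormedSpace.exp (s • ∑ i : Fin k, a i.succ)
          * NormedSpace.exp ((s/2) • a 0)‖ ≤ C₁ * s^3 := hC₁ s ⟨hs0, hsT⟩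
    have h2 : ‖NormedSpace.exp ((s/2) • a 0) * NormedSpace.exp (s • ∑ i : Fin k, a i.succ)
          * NormedSpace.exp ((s/2) • a 0)
        - NormedSpace.exp ((s/2) • a 0) * symTrotterProd k (fun i => a i.succ) s
          * NormedSpace.exp ((s/2) • a 0)‖
        ≤ Real.exp (T * ‖a 0‖) * N1 A * C₂ * s^3 := by
      have iden : NormedSpace.exp ((s/2) • a 0) * NormedSpace.exp (s • ∑ i : Fin k, a i.succ)
            * NormedSpace.exp ((s/2) • a 0)
          - NormedSpace.exp ((s/2) • a 0) * symTrotterProd k (fun i => a i.succ) s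
            * NormedSpace.exp ((s/2) • a 0)
          = NormedSpace.exp ((s/2) • a 0)
            * ((NormedSpace.exp (s • ∑ i : Fin k, a i.succ)
                - symTrotterProd k (fun i => a i.succ) s) * NormedSpace.exp ((s/2) • a 0)) := by
        noncomm_ring
      rw [iden]
      have hd : ‖NormedSpace.exp (s • ∑ i : Fin k, a i.succ)
          - symTrotterProd k (fun i => a i.succ) s‖ ≤ C₂ * s^3 := hC₂ s ⟨hs0, hsT⟩
      have hE : ‖NormedSpace.exp ((s/2) • a 0)‖ ≤ N1 A * Real.exp ((s/2) * ‖a 0‖) := by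
        have := norm_exp_le' ((s/2) • a 0)
        rwa [norm_smul, Real.norm_eq_abs, abs_of_nonneg (by linarith : (0:ℝ) ≤ s/2)] at this
      have hmul : ‖NormedSpace.exp ((s/2) • a 0)
          * ((NormedSpace.exp (s • ∑ i : Fin k, a i.succ)
              - symTrotterProd k (fun i => a i.succ) s) * NormedSpace.exp ((s/2) • a 0))‖
          ≤ Real.exp ((s/2) * ‖a 0‖) * ((C₂ * s^3) * (N1 A * Real.exp ((s/2) * ‖a 0‖))) := by
        refine le_trans (exp_mul_norm_le _ _) ?_
        rw [norm_smul, Real.norm_eq_abs, abs_of_nonneg (by linarith : (0:ℝ) ≤ s/2)]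
        exact mul_le_mul_of_nonneg_left (norm_mul_le_of_le hd hE) (Real.exp_pos _).le
      refine hmul.trans ?_
      have hexp2 : Real.exp ((s/2) * ‖a 0‖) * Real.exp ((s/2) * ‖a 0‖)
          ≤ Real.exp (T * ‖a 0‖) := by
        rw [← Real.exp_add]
        apply Real.exp_le_exp.mpr
        nlinarith [norm_nonneg (a 0)]
      have hs3 : (0:ℝ) ≤ s^3 := by positivity
      nlinarith [Real.exp_pos ((s/2) * ‖a 0‖), Real.exp_pos (T * ‖a 0‖),
        mul_nonneg (mul_nonneg hC₂0.le hs3) hN0]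
    calc ‖_ + _‖ ≤ _ + _ := norm_add_le _ _
      _ ≤ C₁ * s^3 + Real.exp (T * ‖a 0‖) * N1 A * C₂ * s^3 := add_le_add h1 h2
      _ = (C₁ + Real.exp (T * ‖a 0‖) * N1 A * C₂) * s^3 := by ring


end Aux

/-- Symmetric Trotter estimate (Banach-algebra form of Theorem 3.1): for every `T > 0`
there is a constant `C > 0` such that for all `t ∈ [0,T]` and integers `n ≥ 1`,
`‖exp (t (a₁ + ⋯ + a_k)) - σ^{(1)}_{t/n}ⁿ‖ ≤ C t³ / n²`. -/
theorem symmetric_trotter_estimate {A : Type*} [NormedRing A] [NormedAlgebra ℝ A]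
    [CompleteSpace A] (k : ℕ) (a : Fin k → A) :
    ∀ T : ℝ, 0 < T → ∃ C : ℝ, 0 < C ∧
      ∀ t ∈ Set.Icc (0 : ℝ) T, ∀ n : ℕ, 1 ≤ n →
        ‖(NormedSpace.expSeries ℝ A).sum (t • ∑ i, a i) - symTrotterProd k a (t / n) ^ n‖ ≤
          C * t ^ 3 / (n : ℝ) ^ 2 := by

  intro T hT
  obtain ⟨C₀, hC₀0, hC₀⟩ := local_est k a T hT
  set Λ : ℝ := ∑ i, ‖a i‖ with hΛ
  have hΛ0 : 0 ≤ Λ := Finset.sum_nonneg fun i _ => norm_nonneg _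
  have hN1 : (1:ℝ) ≤ N1 A := one_le_N1
  have hN0 : (0:ℝ) ≤ N1 A := le_trans zero_le_one hN1
  refine ⟨N1 A * Real.exp (T * Λ) * C₀, ?_, ?_⟩
  · have h2 := mul_pos (mul_pos (lt_of_lt_of_le one_pos (one_le_N1 (A := A)))
      (Real.exp_pos (T * Λ))) hC₀0
    linarith
  rintro t ⟨ht0, htT⟩ n hn
  have hn0 : (0:ℝ) < n := by exact_mod_cast hn
  have hnne : (n:ℝ) ≠ 0 := ne_of_gt hn0
  set s : ℝ := t / n with hs
  have hs0 : 0 ≤ s := by positivity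
  have hst : s ≤ t := by
    rw [hs]
    exact div_le_self ht0 (by exact_mod_cast hn)
  have hsT : s ≤ T := hst.trans htT
  have hc : NormedSpace.exp (t • ∑ i, a i) = NormedSpace.exp (s • ∑ i, a i) ^ n := by
    let +nondep : NormedAlgebra ℚ A := .restrictScalars ℚ ℝ A
    rw [← NormedSpace.exp_nsmul]
    congr 1
    rw [← Nat.cast_smul_eq_nsmul ℝ, smul_smul]
    congr 1
    rw [mul_comm, div_mul_cancel₀ _ hnne]
  rw [← NormedSpace.exp_eq_expSeries_sum ℝ, hc]
  set L : ℝ := Real.exp (s * Λ) with hL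
  have hL1 : 1 ≤ L := Real.one_le_exp (by positivity)
  have hcm : ∀ m : ℕ, ‖NormedSpace.exp (s • ∑ i, a i) ^ m‖ ≤ N1 A * L ^ m := by
    intro m
    let +nondep : NormedAlgebra ℚ A := .restrictScalars ℚ ℝ A
    rw [← NormedSpace.exp_nsmul]
    refine (norm_exp_le' _).trans ?_
    have harg : ‖(m:ℕ) • s • ∑ i, a i‖ ≤ m * (s * Λ) := by
      rw [← Nat.cast_smul_eq_nsmul ℝ, norm_smul, norm_smul, Real.norm_natCast, Real.norm_eq_abs,
        abs_of_nonneg hs0]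
      have : ‖∑ i, a i‖ ≤ Λ := norm_sum_le _ _
      have hm0 : (0:ℝ) ≤ m := Nat.cast_nonneg m
      exact mul_le_mul_of_nonneg_left (mul_le_mul_of_nonneg_left this hs0) hm0
    have : Real.exp ‖(m:ℕ) • s • ∑ i, a i‖ ≤ L ^ m := by
      rw [hL, ← Real.exp_nat_mul]
      exact Real.exp_le_exp.mpr harg
    exact mul_le_mul_of_nonneg_left this hN0
  have hb : ∀ w : A, ‖symTrotterProd k a s * w‖ ≤ L * ‖w‖ := fun w =>
    sigma_mul_norm_le k a s hs0 w
  have hbc : ‖NormedSpace.exp (s • ∑ i, a i) - symTrotterProd k a s‖ ≤ C₀ * s^3 :=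
    hC₀ s ⟨hs0, hsT⟩
  have key := pow_diff_bound (symTrotterProd k a s) (NormedSpace.exp (s • ∑ i, a i))
    L (N1 A) (C₀ * s^3) hL1 hN0 (by positivity) hb hcm hbc n
  refine key.trans ?_
  have hLn : L ^ n = Real.exp (t * Λ) := by
    rw [hL, ← Real.exp_nat_mul]
    congr 1
    rw [hs]; field_simp
  rw [hLn]
  have hexpmono : Real.exp (t * Λ) ≤ Real.exp (T * Λ) := by
    apply Real.exp_le_exp.mpr
    exact mul_le_mul_of_nonneg_right htT hΛ0
  have heq : (n:ℝ) * N1 A * Real.exp (t * Λ) * (C₀ * s^3)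
      = N1 A * Real.exp (t * Λ) * C₀ * t^3 / (n:ℝ)^2 := by
    rw [hs, div_pow]
    field_simp
  rw [heq]
  gcongr
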